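/- Let (F, ω) be a coquasi-bimonad and B : A → A a right F-module monad in a 2-category K, with ψ_{B,F} : B∘F → F∘B defined by (id_F × (right F-action on B))∘(τ_{B,F} × id_F)∘(id_B × Δ). Let (X, ρ_X) be a right F-comodule equipped with a distributive law τ_{B,X} : B∘X → X∘B such that the coaction ρ_X : (X,τ_{B,X}) → (X∘F, τ_{B,XF}) is a morphism in Mnd(K)(B). Then (X, ψ_{B,X}) is an object of Mnd(K)(B), where ψ_{B,X} = (id_X × (right F-action on B))∘(τ_{B,X} × id_F)∘(id_B × ρ_X). -/
import Mathlib


open CategoryTheory Bicategory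

namespace Paper

variable {K : Type*} [Bicategory K]

/-- A monad in a bicategory. -/
structure Mnd (a : K) where
  E : a ⟶ a
  mul : E ≫ E ⟶ E
  unit : 𝟙 a ⟶ E
  assoc : (α_ E E E).inv ≫ mul ▷ E ≫ mul = E ◁ mul ≫ mul
  left_unit : (λ_ E).inv ≫ unit ▷ E ≫ mul = 𝟙 E
  right_unit : (ρ_ E).inv ≫ E ◁ unit ≫ mul = 𝟙 E

/-- A comonad in a bicategory. -/
structure Cmnd (a : K) where
  E : a ⟶ a
  comul : E ⟶ E ≫ E
  counit : E ⟶ 𝟙 a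
  coassoc : comul ≫ comul ▷ E ≫ (α_ E E E).hom = comul ≫ E ◁ comul
  left_counit : comul ≫ counit ▷ E ≫ (λ_ E).hom = 𝟙 E
  right_counit : comul ≫ E ◁ counit ≫ (ρ_ E).hom = 𝟙 E

variable {a : K}

/-- Tensor (= horizontal composite) of two "unit elements". -/
def tunit {X Y : a ⟶ a} (u : 𝟙 a ⟶ X) (v : 𝟙 a ⟶ Y) : 𝟙 a ⟶ X ≫ Y :=
  (λ_ (𝟙 a)).inv ≫ u ▷ 𝟙 a ≫ X ◁ v

/-- Multiplication on a composite `X ≫ Y` built from multiplications on `X`, `Y`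
and a distributive law `d : Y ≫ X ⟶ X ≫ Y`. -/
def tmul {X Y : a ⟶ a} (mX : X ≫ X ⟶ X) (mY : Y ≫ Y ⟶ Y) (d : Y ≫ X ⟶ X ≫ Y) :
    (X ≫ Y) ≫ X ≫ Y ⟶ X ≫ Y :=
  (α_ X Y (X ≫ Y)).hom ≫ X ◁ ((α_ Y X Y).inv ≫ d ▷ Y ≫ (α_ X Y Y).hom) ≫
    (α_ X X (Y ≫ Y)).inv ≫ mX ▷ (Y ≫ Y) ≫ X ◁ mY

/-- Comultiplication on a composite `X ≫ Y`. -/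
def tcomul {X Y : a ⟶ a} (cX : X ⟶ X ≫ X) (cY : Y ⟶ Y ≫ Y) (d : X ≫ Y ⟶ Y ≫ X) :
    X ≫ Y ⟶ (X ≫ Y) ≫ X ≫ Y :=
  cX ▷ Y ≫ (α_ X X Y).hom ≫
    X ◁ (X ◁ cY ≫ (α_ X Y Y).inv ≫ d ▷ Y ≫ (α_ Y X Y).hom) ≫ (α_ X Y (X ≫ Y)).inv

/-- Extend distributive laws, moving `X` to the left across a composite `Y1 ≫ Y2`. -/
def dext {X Y1 Y2 : a ⟶ a} (d1 : Y1 ≫ X ⟶ X ≫ Y1) (d2 : Y2 ≫ X ⟶ X ≫ Y2) :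
    (Y1 ≫ Y2) ≫ X ⟶ X ≫ Y1 ≫ Y2 :=
  (α_ Y1 Y2 X).hom ≫ Y1 ◁ d2 ≫ (α_ Y1 X Y2).inv ≫ d1 ▷ Y2 ≫ (α_ X Y1 Y2).hom

/-- Extend distributive laws, moving `X` to the right across a composite `Y1 ≫ Y2`. -/
def dext' {X Y1 Y2 : a ⟶ a} (d1 : X ≫ Y1 ⟶ Y1 ≫ X) (d2 : X ≫ Y2 ⟶ Y2 ≫ X) :
    X ≫ Y1 ≫ Y2 ⟶ (Y1 ≫ Y2) ≫ X :=
  (α_ X Y1 Y2).inv ≫ d1 ▷ Y2 ≫ (α_ Y1 X Y2).hom ≫ Y1 ◁ d2 ≫ (α_ Y1 Y2 X).inv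

/-- Convolution product of `f g : 𝟙 a ⟶ T` with respect to a multiplication on `T`. -/
def conv {T : a ⟶ a} (m : T ≫ T ⟶ T) (f g : 𝟙 a ⟶ T) : 𝟙 a ⟶ T :=
  (λ_ (𝟙 a)).inv ≫ f ▷ 𝟙 a ≫ T ◁ g ≫ m

/-- Convolution product of `f g : T ⟶ 𝟙 a` with respect to a comultiplication on `T`. -/
def convC {T : a ⟶ a} (c : T ⟶ T ≫ T) (f g : T ⟶ 𝟙 a) : T ⟶ 𝟙 a :=
  c ≫ f ▷ T ≫ (λ_ T).hom ≫ g

/-- The multiplication on `E ≫ E ≫ E` built from `mul` and the distributive law `τ`. -/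
def mul3 {E : a ⟶ a} (mul : E ≫ E ⟶ E) (τ : E ≫ E ⟶ E ≫ E) :
    (E ≫ E ≫ E) ≫ E ≫ E ≫ E ⟶ E ≫ E ≫ E :=
  tmul mul (tmul mul mul τ) (dext τ τ)

/-- The multiplication on `E ≫ E ≫ E ≫ E`. -/
def mul4 {E : a ⟶ a} (mul : E ≫ E ⟶ E) (τ : E ≫ E ⟶ E ≫ E) :
    (E ≫ E ≫ E ≫ E) ≫ E ≫ E ≫ E ≫ E ⟶ E ≫ E ≫ E ≫ E :=
  tmul mul (mul3 mul τ) (dext τ (dext τ τ))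

/-- The comultiplication on `E ≫ E ≫ E`. -/
def comul3 {E : a ⟶ a} (comul : E ⟶ E ≫ E) (τ : E ≫ E ⟶ E ≫ E) :
    E ≫ E ≫ E ⟶ (E ≫ E ≫ E) ≫ E ≫ E ≫ E :=
  tcomul comul (tcomul comul comul τ) (dext' τ τ)

/-- The comultiplication on `E ≫ E ≫ E ≫ E`. -/
def comul4 {E : a ⟶ a} (comul : E ⟶ E ≫ E) (τ : E ≫ E ⟶ E ≫ E) :
    E ≫ E ≫ E ≫ E ⟶ (E ≫ E ≫ E ≫ E) ≫ E ≫ E ≫ E ≫ E :=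
  tcomul comul (comul3 comul τ) (dext' τ (dext' τ τ))

/-- "Action of `Q ≫ P` on `X ≫ Y`": `P` crosses `X` via `dPX`, then `Q` acts on `X`
and `P` acts on `Y`. -/
def actT {b : K} {P Q X : a ⟶ a} {Y : a ⟶ b}
    (dPX : P ≫ X ⟶ X ≫ P) (aQX : Q ≫ X ⟶ X) (aPY : P ≫ Y ⟶ Y) :
    (Q ≫ P) ≫ X ≫ Y ⟶ X ≫ Y :=
  (α_ Q P (X ≫ Y)).hom ≫ Q ◁ ((α_ P X Y).inv ≫ dPX ▷ Y ≫ (α_ X P Y).hom) ≫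
    (α_ Q X (P ≫ Y)).inv ≫ aQX ▷ (P ≫ Y) ≫ X ◁ aPY

/-- An (endo) 1-cell in `Mnd(K)` over the monad `B`: an object of `Mnd(K)(B)`,
i.e. a 1-cell together with a monadic distributive law. -/
structure MndHom {a : K} (B : Mnd a) (X : a ⟶ a) where
  d : B.E ≫ X ⟶ X ≫ B.E
  mul_law : B.E ◁ d ≫ (α_ B.E X B.E).inv ≫ d ▷ B.E ≫ (α_ X B.E B.E).hom ≫ X ◁ B.mul
      = (α_ B.E B.E X).inv ≫ B.mul ▷ X ≫ d
  unit_law : (λ_ X).inv ≫ B.unit ▷ X ≫ d = (ρ_ X).inv ≫ X ◁ B.unit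

/-- A coquasi-bimonad `(A, F, μ, η, Δ, ε, τ_{F,F}, ω)` in a 2-category, together
with the condition that `τ_{F,Id_A}` is natural with respect to `ω`. -/
structure CoquasiBimonad (a : K) extends Cmnd a where
  mul : E ≫ E ⟶ E
  unit : 𝟙 a ⟶ E
  mul_assoc : (α_ E E E).inv ≫ mul ▷ E ≫ mul = E ◁ mul ≫ mul
  mul_left_unit : (λ_ E).inv ≫ unit ▷ E ≫ mul = 𝟙 E
  mul_right_unit : (ρ_ E).inv ≫ E ◁ unit ≫ mul = 𝟙 E
  τ : E ≫ E ⟶ E ≫ E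
  /-- `τ` is a left monadic distributive law -/
  τ_lm : E ◁ τ ≫ (α_ E E E).inv ≫ τ ▷ E ≫ (α_ E E E).hom ≫ E ◁ mul
      = (α_ E E E).inv ≫ mul ▷ E ≫ τ
  τ_lm_unit : (λ_ E).inv ≫ unit ▷ E ≫ τ = (ρ_ E).inv ≫ E ◁ unit
  /-- `τ` is a right monadic distributive law -/
  τ_rm : τ ▷ E ≫ (α_ E E E).hom ≫ E ◁ τ ≫ (α_ E E E).inv ≫ mul ▷ E
      = (α_ E E E).hom ≫ E ◁ mul ≫ τ
  τ_rm_unit : (ρ_ E).inv ≫ E ◁ unit ≫ τ = (λ_ E).inv ≫ unit ▷ E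
  /-- `τ` is a left comonadic distributive law -/
  τ_lc : comul ▷ E ≫ (α_ E E E).hom ≫ E ◁ τ ≫ (α_ E E E).inv ≫ τ ▷ E ≫ (α_ E E E).hom
      = τ ≫ E ◁ comul
  τ_lc_counit : τ ≫ counit ▷ E ≫ (λ_ E).hom = E ◁ counit ≫ (ρ_ E).hom
  /-- `τ` is a right comonadic distributive law -/
  τ_rc : E ◁ comul ≫ (α_ E E E).inv ≫ τ ▷ E ≫ (α_ E E E).hom ≫ E ◁ τ
      = τ ≫ comul ▷ E ≫ (α_ E E E).hom
  τ_rc_counit : τ ≫ E ◁ counit ≫ (ρ_ E).hom = counit ▷ E ≫ (λ_ E).hom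
  /-- bialgebra-type compatibility of `mul` and `comul` through `τ` -/
  mul_comul : mul ≫ comul = comul ▷ E ≫ (E ≫ E) ◁ comul ≫ tmul mul mul τ
  comul_unit : unit ≫ comul = tunit unit unit
  counit_mul : mul ≫ counit = E ◁ counit ≫ (ρ_ E).hom ≫ counit
  counit_unit : unit ≫ counit = 𝟙 (𝟙 a)
  /-- the coassociator `ω` -/
  ω : E ≫ E ≫ E ⟶ 𝟙 a
  /-- `ω` is normalized -/
  ω_normal : E ◁ ((λ_ E).inv ≫ unit ▷ E) ≫ ω = E ◁ counit ≫ (ρ_ E).hom ≫ counit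
  /-- `ω` is convolution invertible -/
  ω_inv : ∃ ω' : E ≫ E ≫ E ⟶ 𝟙 a,
      convC (comul3 comul τ) ω ω'
        = E ◁ (E ◁ counit ≫ (ρ_ E).hom ≫ counit) ≫ (ρ_ E).hom ≫ counit ∧
      convC (comul3 comul τ) ω' ω
        = E ◁ (E ◁ counit ≫ (ρ_ E).hom ≫ counit) ≫ (ρ_ E).hom ≫ counit
  /-- quasi-associativity of `mul` governed by `ω` -/
  quasi_assoc :
      comul3 comul τ ≫ ω ▷ (E ≫ E ≫ E) ≫ (λ_ (E ≫ E ≫ E)).hom ≫ E ◁ mul ≫ mul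
      = comul3 comul τ ≫ (E ≫ E ≫ E) ◁ ω ≫ (ρ_ (E ≫ E ≫ E)).hom ≫ E ◁ mul ≫ mul
  /-- the dual 3-cocycle condition for `ω` -/
  cocycle :
      convC (comul4 comul τ)
        (convC (comul4 comul τ)
          (counit ▷ (E ≫ E ≫ E) ≫ (λ_ (E ≫ E ≫ E)).hom ≫ ω)
          (E ◁ ((α_ E E E).inv ≫ mul ▷ E) ≫ ω))
        (E ◁ (E ◁ (E ◁ counit ≫ (ρ_ E).hom)) ≫ ω)
      = convC (comul4 comul τ) (E ◁ (E ◁ mul) ≫ ω)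
          ((α_ E E (E ≫ E)).inv ≫ mul ▷ (E ≫ E) ≫ ω)
  /-- `τ_{F,Id_A}` is natural with respect to `ω` -/
  ω_nat : E ◁ ω ≫ (ρ_ E).hom = dext' τ (dext' τ τ) ≫ ω ▷ E ≫ (λ_ E).hom

lemma aux_mul (Bm F X : a ⟶ a) (mul : Bm ≫ Bm ⟶ Bm) (r : Bm ≫ F ⟶ Bm)
    (comul : F ⟶ F ≫ F) (τBF : Bm ≫ F ⟶ F ≫ Bm) (τBX : Bm ≫ X ⟶ X ≫ Bm)
    (ρc : X ⟶ X ≫ F)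
    (hMM : Bm ◁ (Bm ◁ comul ≫ (α_ Bm F F).inv ≫ τBF ▷ F ≫ (α_ F Bm F).hom ≫ F ◁ r) ≫
        (α_ Bm F Bm).inv ≫ r ▷ Bm ≫ mul = (α_ Bm Bm F).inv ≫ mul ▷ F ≫ r)
    (hρ_coassoc : ρc ≫ X ◁ comul = ρc ≫ ρc ▷ F ≫ (α_ X F F).hom)
    (hτBX_mul : Bm ◁ τBX ≫ (α_ Bm X Bm).inv ≫ τBX ▷ Bm ≫ (α_ X Bm Bm).hom ≫ X ◁ mul
      = (α_ Bm Bm X).inv ≫ mul ▷ X ≫ τBX)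
    (hρ_mor : τBX ≫ ρc ▷ Bm ≫ (α_ X F Bm).hom
      = Bm ◁ ρc ≫ (α_ Bm X F).inv ≫ τBX ▷ F ≫ (α_ X Bm F).hom ≫ X ◁ τBF) :
    Bm ◁ (Bm ◁ ρc ≫ (α_ Bm X F).inv ≫ τBX ▷ F ≫ (α_ X Bm F).hom ≫ X ◁ r) ≫
      (α_ Bm X Bm).inv ≫
      (Bm ◁ ρc ≫ (α_ Bm X F).inv ≫ τBX ▷ F ≫ (α_ X Bm F).hom ≫ X ◁ r) ▷ Bm ≫
      (α_ X Bm Bm).hom ≫ X ◁ mul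
    = (α_ Bm Bm X).inv ≫ mul ▷ X ≫
        (Bm ◁ ρc ≫ (α_ Bm X F).inv ≫ τBX ▷ F ≫ (α_ X Bm F).hom ≫ X ◁ r) := by
  calc
    _ = Bm ◁ (Bm ◁ ρc) ⊗≫ Bm ◁ (τBX ▷ F) ⊗≫ Bm ◁ (X ◁ r ≫ ρc ▷ Bm) ⊗≫
          (τBX ▷ F) ▷ Bm ⊗≫ (X ◁ r) ▷ Bm ⊗≫ X ◁ mul := by bicategory
    _ = Bm ◁ (Bm ◁ ρc) ⊗≫ Bm ◁ (τBX ▷ F) ⊗≫ Bm ◁ (ρc ▷ (Bm ≫ F) ≫ (X ≫ F) ◁ r) ⊗≫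
          (τBX ▷ F) ▷ Bm ⊗≫ (X ◁ r) ▷ Bm ⊗≫ X ◁ mul := by rw [whisker_exchange ρc r]
    _ = Bm ◁ (Bm ◁ ρc) ⊗≫ Bm ◁ (τBX ▷ F) ⊗≫ Bm ◁ (ρc ▷ (Bm ≫ F)) ⊗≫
          ((Bm ≫ X) ◁ (F ◁ r) ≫ τBX ▷ (F ≫ Bm)) ⊗≫ (X ◁ r) ▷ Bm ⊗≫ X ◁ mul := by
        bicategory
    _ = Bm ◁ (Bm ◁ ρc) ⊗≫ Bm ◁ (τBX ▷ F) ⊗≫ Bm ◁ (ρc ▷ (Bm ≫ F)) ⊗≫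
          (τBX ▷ (F ≫ Bm ≫ F) ≫ (X ≫ Bm) ◁ (F ◁ r)) ⊗≫ (X ◁ r) ▷ Bm ⊗≫ X ◁ mul := by
        rw [whisker_exchange τBX (F ◁ r)]
    _ = Bm ◁ (Bm ◁ ρc) ⊗≫ Bm ◁ ((τBX ≫ ρc ▷ Bm ≫ (α_ X F Bm).hom) ▷ F) ⊗≫
          τBX ▷ (F ≫ Bm ≫ F) ⊗≫ (X ≫ Bm) ◁ (F ◁ r) ⊗≫ (X ◁ r) ▷ Bm ⊗≫ X ◁ mul := by
        bicategory
    _ = Bm ◁ (Bm ◁ ρc) ⊗≫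
          Bm ◁ ((Bm ◁ ρc ≫ (α_ Bm X F).inv ≫ τBX ▷ F ≫ (α_ X Bm F).hom ≫ X ◁ τBF) ▷ F) ⊗≫
          τBX ▷ (F ≫ Bm ≫ F) ⊗≫ (X ≫ Bm) ◁ (F ◁ r) ⊗≫ (X ◁ r) ▷ Bm ⊗≫ X ◁ mul := by
        rw [hρ_mor]
    _ = Bm ◁ (Bm ◁ (ρc ≫ ρc ▷ F ≫ (α_ X F F).hom)) ⊗≫ Bm ◁ ((τBX ▷ F) ▷ F) ⊗≫
          Bm ◁ ((X ◁ τBF) ▷ F) ⊗≫ τBX ▷ (F ≫ Bm ≫ F) ⊗≫ (X ≫ Bm) ◁ (F ◁ r) ⊗≫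
          (X ◁ r) ▷ Bm ⊗≫ X ◁ mul := by bicategory
    _ = Bm ◁ (Bm ◁ (ρc ≫ X ◁ comul)) ⊗≫ Bm ◁ ((τBX ▷ F) ▷ F) ⊗≫
          Bm ◁ ((X ◁ τBF) ▷ F) ⊗≫ τBX ▷ (F ≫ Bm ≫ F) ⊗≫ (X ≫ Bm) ◁ (F ◁ r) ⊗≫
          (X ◁ r) ▷ Bm ⊗≫ X ◁ mul := by rw [hρ_coassoc]
    _ = Bm ◁ (Bm ◁ (ρc ≫ X ◁ comul)) ⊗≫ Bm ◁ ((τBX ▷ F) ▷ F) ⊗≫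
          ((Bm ≫ X) ◁ (τBF ▷ F) ≫ τBX ▷ ((F ≫ Bm) ≫ F)) ⊗≫ (X ≫ Bm) ◁ (F ◁ r) ⊗≫
          (X ◁ r) ▷ Bm ⊗≫ X ◁ mul := by bicategory
    _ = Bm ◁ (Bm ◁ (ρc ≫ X ◁ comul)) ⊗≫ Bm ◁ ((τBX ▷ F) ▷ F) ⊗≫
          (τBX ▷ ((Bm ≫ F) ≫ F) ≫ (X ≫ Bm) ◁ (τBF ▷ F)) ⊗≫ (X ≫ Bm) ◁ (F ◁ r) ⊗≫
          (X ◁ r) ▷ Bm ⊗≫ X ◁ mul := by rw [whisker_exchange τBX (τBF ▷ F)]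
    _ = Bm ◁ (Bm ◁ ρc) ⊗≫
          ((Bm ≫ Bm ≫ X) ◁ comul ≫
            (Bm ◁ τBX ≫ (α_ Bm X Bm).inv ≫ τBX ▷ Bm ≫ (α_ X Bm Bm).hom) ▷ (F ≫ F)) ⊗≫
          (X ≫ Bm) ◁ (τBF ▷ F) ⊗≫ (X ≫ Bm) ◁ (F ◁ r) ⊗≫ (X ◁ r) ▷ Bm ⊗≫ X ◁ mul := by
        bicategory
    _ = Bm ◁ (Bm ◁ ρc) ⊗≫
          ((Bm ◁ τBX ≫ (α_ Bm X Bm).inv ≫ τBX ▷ Bm ≫ (α_ X Bm Bm).hom) ▷ F ≫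
            (X ≫ Bm ≫ Bm) ◁ comul) ⊗≫
          (X ≫ Bm) ◁ (τBF ▷ F) ⊗≫ (X ≫ Bm) ◁ (F ◁ r) ⊗≫ (X ◁ r) ▷ Bm ⊗≫ X ◁ mul := by
        rw [whisker_exchange (Bm ◁ τBX ≫ (α_ Bm X Bm).inv ≫ τBX ▷ Bm ≫ (α_ X Bm Bm).hom)
          comul]
    _ = Bm ◁ (Bm ◁ ρc) ⊗≫
          (Bm ◁ τBX ≫ (α_ Bm X Bm).inv ≫ τBX ▷ Bm ≫ (α_ X Bm Bm).hom) ▷ F ⊗≫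
          X ◁ (Bm ◁ (Bm ◁ comul ≫ (α_ Bm F F).inv ≫ τBF ▷ F ≫ (α_ F Bm F).hom ≫ F ◁ r) ≫
            (α_ Bm F Bm).inv ≫ r ▷ Bm ≫ mul) := by bicategory
    _ = Bm ◁ (Bm ◁ ρc) ⊗≫
          (Bm ◁ τBX ≫ (α_ Bm X Bm).inv ≫ τBX ▷ Bm ≫ (α_ X Bm Bm).hom) ▷ F ⊗≫
          X ◁ ((α_ Bm Bm F).inv ≫ mul ▷ F ≫ r) := by rw [hMM]
    _ = Bm ◁ (Bm ◁ ρc) ⊗≫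
          (Bm ◁ τBX ≫ (α_ Bm X Bm).inv ≫ τBX ▷ Bm ≫ (α_ X Bm Bm).hom ≫ X ◁ mul) ▷ F ⊗≫
          X ◁ r := by bicategory
    _ = Bm ◁ (Bm ◁ ρc) ⊗≫ ((α_ Bm Bm X).inv ≫ mul ▷ X ≫ τBX) ▷ F ⊗≫ X ◁ r := by
        rw [hτBX_mul]
    _ = (α_ Bm Bm X).inv ≫ ((Bm ≫ Bm) ◁ ρc ≫ mul ▷ (X ≫ F)) ⊗≫ τBX ▷ F ⊗≫ X ◁ r := by
        bicategory
    _ = (α_ Bm Bm X).inv ≫ (mul ▷ X ≫ Bm ◁ ρc) ⊗≫ τBX ▷ F ⊗≫ X ◁ r := by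
        rw [whisker_exchange mul ρc]
    _ = _ := by bicategory

lemma aux_unit (Bm F X : a ⟶ a) (u : 𝟙 a ⟶ Bm) (counit : F ⟶ 𝟙 a)
    (r : Bm ≫ F ⟶ Bm) (τBX : Bm ≫ X ⟶ X ≫ Bm) (ρc : X ⟶ X ≫ F)
    (hτBX_unit : (λ_ X).inv ≫ u ▷ X ≫ τBX = (ρ_ X).inv ≫ X ◁ u)
    (hMM_unit : (λ_ F).inv ≫ u ▷ F ≫ r = counit ≫ u)
    (hρ_counit : ρc ≫ X ◁ counit ≫ (ρ_ X).hom = 𝟙 X) :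
    (λ_ X).inv ≫ u ▷ X ≫
      (Bm ◁ ρc ≫ (α_ Bm X F).inv ≫ τBX ▷ F ≫ (α_ X Bm F).hom ≫ X ◁ r)
    = (ρ_ X).inv ≫ X ◁ u := by
  calc
    _ = (λ_ X).inv ≫ (u ▷ X ≫ Bm ◁ ρc) ⊗≫ τBX ▷ F ⊗≫ X ◁ r := by bicategory
    _ = (λ_ X).inv ≫ (𝟙 a ◁ ρc ≫ u ▷ (X ≫ F)) ⊗≫ τBX ▷ F ⊗≫ X ◁ r := by
        rw [← whisker_exchange u ρc]
    _ = ρc ⊗≫ ((λ_ X).inv ≫ u ▷ X ≫ τBX) ▷ F ⊗≫ X ◁ r := by bicategory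
    _ = ρc ⊗≫ ((ρ_ X).inv ≫ X ◁ u) ▷ F ⊗≫ X ◁ r := by rw [hτBX_unit]
    _ = ρc ⊗≫ X ◁ ((λ_ F).inv ≫ u ▷ F ≫ r) := by bicategory
    _ = ρc ⊗≫ X ◁ (counit ≫ u) := by rw [hMM_unit]
    _ = (ρc ≫ X ◁ counit ≫ (ρ_ X).hom) ≫ (ρ_ X).inv ≫ X ◁ u := by bicategory
    _ = (ρ_ X).inv ≫ X ◁ u := by rw [hρ_counit]; simp

/-- Let `(F, ω)` be a coquasi-bimonad and `B` a right `F`-module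
monad in `K`, with `ψ_{B,F} = (id_F × r) ∘ (τ_{B,F} × id_F) ∘ (id_B × Δ)` where `r`
is the right `F`-action on `B`.  If `(X, ρ)` is a right `F`-comodule with a
distributive law `τ_{B,X}` making the coaction `ρ` a morphism in `Mnd(K)(B)`, then
`(X, ψ_{B,X})` is an object of `Mnd(K)(B)`, where
`ψ_{B,X} = (id_X × r) ∘ (τ_{B,X} × id_F) ∘ (id_B × ρ)`. -/
theorem comodule_gives_mnd_object {K : Type*} [Bicategory K] [Bicategory.Strict K]
    {a : K} (Q : CoquasiBimonad a) (B : Mnd a)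
    -- `(F, τ_{B,F})` is an object of `Mnd(K)(B)`
    (τBF : B.E ≫ Q.E ⟶ Q.E ≫ B.E)
    (hτBF_mul : B.E ◁ τBF ≫ (α_ B.E Q.E B.E).inv ≫ τBF ▷ B.E ≫
        (α_ Q.E B.E B.E).hom ≫ Q.E ◁ B.mul
      = (α_ B.E B.E Q.E).inv ≫ B.mul ▷ Q.E ≫ τBF)
    (hτBF_unit : (λ_ Q.E).inv ≫ B.unit ▷ Q.E ≫ τBF = (ρ_ Q.E).inv ≫ Q.E ◁ B.unit)
    -- `B` is a right `F`-module monad via `rAct` (`F` measures `B`), where the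
    (rAct : B.E ≫ Q.E ⟶ B.E)
    (hMM : B.E ◁ (B.E ◁ Q.comul ≫ (α_ B.E Q.E Q.E).inv ≫ τBF ▷ Q.E ≫
          (α_ Q.E B.E Q.E).hom ≫ Q.E ◁ rAct) ≫
        (α_ B.E Q.E B.E).inv ≫ rAct ▷ B.E ≫ B.mul
      = (α_ B.E B.E Q.E).inv ≫ B.mul ▷ Q.E ≫ rAct)
    (hMM_unit : (λ_ Q.E).inv ≫ B.unit ▷ Q.E ≫ rAct = Q.counit ≫ B.unit)
    -- `(X, ρc)` is a right `F`-comodule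
    (X : a ⟶ a) (ρc : X ⟶ X ≫ Q.E)
    (hρ_coassoc : ρc ≫ X ◁ Q.comul = ρc ≫ ρc ▷ Q.E ≫ (α_ X Q.E Q.E).hom)
    (hρ_counit : ρc ≫ X ◁ Q.counit ≫ (ρ_ X).hom = 𝟙 X)
    -- `(X, τ_{B,X})` is an object of `Mnd(K)(B)` and `ρc` is a morphism
    -- `(X, τ_{B,X}) ⟶ (X ∘ F, τ_{B,XF})` in `Mnd(K)(B)`
    (τBX : B.E ≫ X ⟶ X ≫ B.E)
    (hτBX_mul : B.E ◁ τBX ≫ (α_ B.E X B.E).inv ≫ τBX ▷ B.E ≫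
        (α_ X B.E B.E).hom ≫ X ◁ B.mul
      = (α_ B.E B.E X).inv ≫ B.mul ▷ X ≫ τBX)
    (hτBX_unit : (λ_ X).inv ≫ B.unit ▷ X ≫ τBX = (ρ_ X).inv ≫ X ◁ B.unit)
    (hρ_mor : τBX ≫ ρc ▷ B.E ≫ (α_ X Q.E B.E).hom
      = B.E ◁ ρc ≫ (α_ B.E X Q.E).inv ≫ τBX ▷ Q.E ≫ (α_ X B.E Q.E).hom ≫
          X ◁ τBF) :
    ∃ h : MndHom B X,
      h.d = B.E ◁ ρc ≫ (α_ B.E X Q.E).inv ≫ τBX ▷ Q.E ≫ (α_ X B.E Q.E).hom ≫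
        X ◁ rAct := by
  refine ⟨⟨B.E ◁ ρc ≫ (α_ B.E X Q.E).inv ≫ τBX ▷ Q.E ≫ (α_ X B.E Q.E).hom ≫
      X ◁ rAct, ?_, ?_⟩, rfl⟩
  · exact aux_mul B.E Q.E X B.mul rAct Q.comul τBF τBX ρc hMM hρ_coassoc hτBX_mul hρ_mor
  · exact aux_unit B.E Q.E X B.unit Q.counit rAct τBX ρc hτBX_unit hMM_unit hρ_counit

end Paper
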